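/- Let g be a Lie algebra over a field K and let π : g̃ → g be a surjective Lie algebra homomorphism whose kernel is central in g̃ (i.e. g̃ is a central extension of g). If g is quasi-finite, then g̃ is quasi-finite. -/

import Mathlib

/-- A Lie algebra is *quasi-finite* if every Lie subalgebra of finite codimension
contains an ideal of finite codimension. -/
def QuasiFinite (K L : Type*) [Field K] [LieRing L] [LieAlgebra K L] : Prop :=
  ∀ h : LieSubalgebra K L, FiniteDimensional K (L ⧸ h.toSubmodule) →
    ∃ I : LieIdeal K L, (∀ x, x ∈ I → x ∈ h) ∧
      FiniteDimensional K (L ⧸ (I : LieSubmodule K L L).toSubmodule)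

private lemma finQuot_of_ker_le {K M W : Type*} [Field K] [AddCommGroup M] [Module K M]
    [AddCommGroup W] [Module K W] [FiniteDimensional K W]
    (f : M →ₗ[K] W) (p : Submodule K M) (hp : LinearMap.ker f ≤ p) :
    FiniteDimensional K (M ⧸ p) := by
  have h1 : FiniteDimensional K (M ⧸ LinearMap.ker f) :=
    Module.Finite.equiv f.quotKerEquivRange.symm
  refine Module.Finite.of_surjective ((LinearMap.ker f).mapQ p LinearMap.id hp) ?_
  intro z
  obtain ⟨x, rfl⟩ := Submodule.mkQ_surjective p z
  exact ⟨(LinearMap.ker f).mkQ x, by simp [Submodule.mapQ_apply]⟩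

/-- A central extension of a quasi-finite Lie algebra is quasi-finite. -/
theorem quasiFinite_of_centralExtension
    (K : Type*) [Field K]
    (g : Type*) [LieRing g] [LieAlgebra K g]
    (gE : Type*) [LieRing gE] [LieAlgebra K gE]
    (π : gE →ₗ⁅K⁆ g) (hsurj : Function.Surjective π)
    (hcentral : ∀ x ∈ π.ker, ∀ y : gE, ⁅x, y⁆ = 0)
    (hg : QuasiFinite K g) :
    QuasiFinite K gE := by
  intro h hfin
  -- centrality, convenient form
  have hker : ∀ x : gE, π x = 0 → ∀ y : gE, ⁅x, y⁆ = 0 := by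
    intro x hx y
    exact hcentral x (LieHom.mem_ker.mpr hx) y
  -- a linear section of π
  obtain ⟨σ, hσ⟩ := π.toLinearMap.exists_rightInverse_of_surjective
    (LinearMap.range_eq_top.mpr hsurj)
  have hσ' : ∀ u : g, π (σ u) = u := fun u => LinearMap.congr_fun hσ u
  have heq : ∀ a b c : gE, π a = π b → ⁅a, c⁆ = ⁅b, c⁆ := by
    intro a b c hab
    have h0 : ⁅a - b, c⁆ = 0 := hker _ (by simp [hab]) c
    rw [sub_lie] at h0
    exact sub_eq_zero.mp h0
  -- the image of h
  set N : Submodule K g := h.toSubmodule.map π.toLinearMap with hN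
  have hNfin : FiniteDimensional K (g ⧸ N) := by
    have hle : h.toSubmodule ≤ N.comap π.toLinearMap := by
      intro x hx
      exact Submodule.mem_comap.mpr (Submodule.mem_map_of_mem hx)
    refine Module.Finite.of_surjective (h.toSubmodule.mapQ N π.toLinearMap hle) ?_
    intro z
    obtain ⟨v, rfl⟩ := Submodule.mkQ_surjective N z
    obtain ⟨x, rfl⟩ := hsurj v
    exact ⟨h.toSubmodule.mkQ x, by simp [Submodule.mapQ_apply]⟩
  -- a finite basis of gE ⧸ h, with lifts
  set V := gE ⧸ h.toSubmodule with hV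
  let b : Module.Basis (Fin (Module.finrank K V)) K V := Module.finBasis K V
  have hy : ∀ i, ∃ z : gE, Submodule.Quotient.mk z = b i := fun i =>
    Submodule.Quotient.mk_surjective h.toSubmodule (b i)
  choose y hy using hy
  -- key fact: if u ∈ N and ⁅σ u, y i⁆ ∈ h for all i, then ⁅σ u, w⁆ ∈ h for all w
  have key : ∀ u : g, u ∈ N → (∀ i, ⁅σ u, y i⁆ ∈ h.toSubmodule) →
      ∀ w : gE, ⁅σ u, w⁆ ∈ h.toSubmodule := by
    intro u hu hyi w
    obtain ⟨x, hxh, hxu⟩ := hu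
    simp only [LieHom.coe_toLinearMap] at hxu
    have hcent : ∀ c : gE, c ∈ h.toSubmodule → ⁅σ u, c⁆ ∈ h.toSubmodule := by
      intro c hc
      rw [heq (σ u) x c (by rw [hσ' u, hxu])]
      exact h.lie_mem hxh hc
    -- decompose w along the basis
    set c := b.repr (Submodule.Quotient.mk w : V) with hc
    set w' : gE := ∑ i, c i • y i with hw'
    have hmkw' : (Submodule.Quotient.mk w' : V) = Submodule.Quotient.mk w := by
      have h1 : h.toSubmodule.mkQ w' = ∑ i, c i • h.toSubmodule.mkQ (y i) := by
        rw [hw', map_sum]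
        simp
      simp only [Submodule.mkQ_apply] at h1
      rw [h1]
      simp only [hy]
      exact b.sum_repr _
    have hsub : w - w' ∈ h.toSubmodule := by
      have := (Submodule.Quotient.eq h.toSubmodule).mp hmkw'.symm
      exact this
    -- the comap submodule
    set W : Submodule K gE := h.toSubmodule.comap (LieAlgebra.ad K gE (σ u)) with hW
    have hmemW : ∀ z : gE, z ∈ W ↔ ⁅σ u, z⁆ ∈ h.toSubmodule := by
      intro z
      rw [hW, Submodule.mem_comap, LieAlgebra.ad_apply]
    have h1 : w - w' ∈ W := (hmemW _).mpr (hcent _ hsub)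
    have h2 : w' ∈ W := by
      rw [hw']
      exact Submodule.sum_mem _ fun i _ => Submodule.smul_mem _ _ ((hmemW _).mpr (hyi i))
    have h3 : w ∈ W := by
      have : w = (w - w') + w' := (sub_add_cancel w w').symm
      rw [this]
      exact Submodule.add_mem _ h1 h2
    exact (hmemW w).mp h3
  -- the subalgebra S of g
  set S : LieSubalgebra K g :=
    { carrier := {u : g | ∃ x : gE, π x = u ∧ x ∈ h ∧ ∀ y : gE, ⁅x, y⁆ ∈ h}
      zero_mem' := ⟨0, by simp, h.zero_mem, fun y => by simp [h.zero_mem]⟩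
      add_mem' := by
        rintro u u' ⟨x, hxu, hxh, hx⟩ ⟨x', hxu', hxh', hx'⟩
        exact ⟨x + x', by simp [hxu, hxu'], h.add_mem hxh hxh',
          fun y => by rw [add_lie]; exact h.add_mem (hx y) (hx' y)⟩
      smul_mem' := by
        rintro t u ⟨x, hxu, hxh, hx⟩
        exact ⟨t • x, by simp [hxu], h.smul_mem t hxh,
          fun y => by rw [smul_lie]; exact h.smul_mem t (hx y)⟩
      lie_mem' := by
        rintro u u' ⟨x, hxu, hxh, hx⟩ ⟨x', hxu', hxh', hx'⟩
        refine ⟨⁅x, x'⁆, by simp [hxu, hxu'], h.lie_mem hxh hxh', fun y => ?_⟩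
        rw [lie_lie]
        exact h.sub_mem (hx _) (hx' _) } with hS
  -- S has finite codimension: it contains the kernel of an explicit map to a f.d. space
  have hSfin : FiniteDimensional K (g ⧸ S.toSubmodule) := by
    let F2 : g →ₗ[K] (Fin (Module.finrank K V) → V) :=
      { toFun := fun u i => Submodule.Quotient.mk ⁅σ u, y i⁆
        map_add' := by intro a a'; funext i; simp [add_lie]
        map_smul' := by intro t a; funext i; simp [smul_lie] }
    let F : g →ₗ[K] (g ⧸ N) × (Fin (Module.finrank K V) → V) := LinearMap.prod N.mkQ F2
    refine finQuot_of_ker_le F S.toSubmodule ?_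
    intro u hu
    rw [LinearMap.mem_ker, LinearMap.prod_apply, Prod.mk_eq_zero] at hu
    obtain ⟨hu1, hu2⟩ := hu
    have huN : u ∈ N := (Submodule.Quotient.mk_eq_zero N).mp hu1
    have hyi : ∀ i, ⁅σ u, y i⁆ ∈ h.toSubmodule := by
      intro i
      have : (Submodule.Quotient.mk ⁅σ u, y i⁆ : V) = 0 := congr_fun hu2 i
      exact (Submodule.Quotient.mk_eq_zero _).mp this
    have hall := key u huN hyi
    obtain ⟨x, hxh, hxu⟩ := huN
    simp only [LieHom.coe_toLinearMap] at hxu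
    refine ⟨x, hxu, hxh, fun w => ?_⟩
    rw [heq x (σ u) w (by rw [hσ' u, hxu])]
    exact hall w
  -- apply quasi-finiteness of g
  obtain ⟨I, hIS, hIfin⟩ := hg S hSfin
  -- the ideal J of gE
  set J : LieIdeal K gE :=
    { toSubmodule := ((I : LieSubmodule K g g).toSubmodule.comap π.toLinearMap) ⊓ h.toSubmodule
      lie_mem := by
        rintro x m ⟨hm1, hm2⟩
        have hmI : π m ∈ I := hm1
        obtain ⟨x₀, hx₀u, hx₀h, hx₀⟩ := hIS (π m) hmI
        have hxm : ⁅x, m⁆ = -⁅x₀, x⁆ := by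
          rw [← lie_skew, heq m x₀ x hx₀u.symm]
        constructor
        · show π ⁅x, m⁆ ∈ (I : LieSubmodule K g g).toSubmodule
          rw [π.map_lie]
          exact I.lie_mem hmI
        · show ⁅x, m⁆ ∈ h.toSubmodule
          rw [hxm]
          exact h.toSubmodule.neg_mem (hx₀ x) } with hJ
  refine ⟨J, ?_, ?_⟩
  · intro x hx
    exact hx.2
  · -- finite codimension of J
    let G : gE →ₗ[K] (g ⧸ (I : LieSubmodule K g g).toSubmodule) × (gE ⧸ h.toSubmodule) :=
      LinearMap.prod ((I : LieSubmodule K g g).toSubmodule.mkQ ∘ₗ π.toLinearMap)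
        h.toSubmodule.mkQ
    refine finQuot_of_ker_le G _ ?_
    intro x hx
    rw [LinearMap.mem_ker, LinearMap.prod_apply, Prod.mk_eq_zero] at hx
    obtain ⟨hx1, hx2⟩ := hx
    have hx1' : (Submodule.Quotient.mk (π x) :
        g ⧸ (I : LieSubmodule K g g).toSubmodule) = 0 := hx1
    have hx2' : (Submodule.Quotient.mk x : gE ⧸ h.toSubmodule) = 0 := hx2
    refine Submodule.mem_inf.mpr ⟨?_, ?_⟩
    · exact Submodule.mem_comap.mpr ((Submodule.Quotient.mk_eq_zero _).mp hx1')
    · exact (Submodule.Quotient.mk_eq_zero _).mp hx2'
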